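/- For A = diag(ω₁,…,ω_n,ω₁,…,ω_n) with ω₁²,…,ω_n² pairwise distinct and nonzero, a symmetric 2n×2n matrix M lies in the range of χ_A(B) = BJA − AJB (B ranging over symmetric matrices) if and only if the diagonal of M has the form (g₁,…,g_n,−g₁,…,−g_n) for some real g₁,…,g_n. -/

import Mathlib

open Matrix
section helpers
variable {n : ℕ} (ω : Fin n → ℝ) (B : Matrix (Fin n ⊕ Fin n) (Fin n ⊕ Fin n) ℝ)

lemma chi_ll (i j : Fin n) :
    ((B * fromBlocks 0 1 (-1) 0 * diagonal (Sum.elim ω ω)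
      - diagonal (Sum.elim ω ω) * fromBlocks 0 1 (-1) 0 * B :
        Matrix (Fin n ⊕ Fin n) (Fin n ⊕ Fin n) ℝ)) (Sum.inl i) (Sum.inl j)
    = -(ω j) * B (Sum.inl i) (Sum.inr j) - ω i * B (Sum.inr i) (Sum.inl j) := by
  simp [Matrix.mul_apply, Fintype.sum_sum_type, Matrix.fromBlocks, Matrix.diagonal,
    Matrix.one_apply, ite_mul, mul_ite, Finset.mul_sum, Finset.sum_ite_eq,
    Finset.sum_ite_eq', mul_comm]

lemma chi_lr (i j : Fin n) :
    ((B * fromBlocks 0 1 (-1) 0 * diagonal (Sum.elim ω ω)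
      - diagonal (Sum.elim ω ω) * fromBlocks 0 1 (-1) 0 * B :
        Matrix (Fin n ⊕ Fin n) (Fin n ⊕ Fin n) ℝ)) (Sum.inl i) (Sum.inr j)
    = ω j * B (Sum.inl i) (Sum.inl j) - ω i * B (Sum.inr i) (Sum.inr j) := by
  simp [Matrix.mul_apply, Fintype.sum_sum_type, Matrix.fromBlocks, Matrix.diagonal,
    Matrix.one_apply, ite_mul, mul_ite, Finset.mul_sum, Finset.sum_ite_eq,
    Finset.sum_ite_eq', mul_comm]

lemma chi_rl (i j : Fin n) :
    ((B * fromBlocks 0 1 (-1) 0 * diagonal (Sum.elim ω ω)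
      - diagonal (Sum.elim ω ω) * fromBlocks 0 1 (-1) 0 * B :
        Matrix (Fin n ⊕ Fin n) (Fin n ⊕ Fin n) ℝ)) (Sum.inr i) (Sum.inl j)
    = -(ω j) * B (Sum.inr i) (Sum.inr j) + ω i * B (Sum.inl i) (Sum.inl j) := by
  simp [Matrix.mul_apply, Fintype.sum_sum_type, Matrix.fromBlocks, Matrix.diagonal,
    Matrix.one_apply, ite_mul, mul_ite, Finset.mul_sum, Finset.sum_ite_eq,
    Finset.sum_ite_eq', mul_comm]

lemma chi_rr (i j : Fin n) :
    ((B * fromBlocks 0 1 (-1) 0 * diagonal (Sum.elim ω ω)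
      - diagonal (Sum.elim ω ω) * fromBlocks 0 1 (-1) 0 * B :
        Matrix (Fin n ⊕ Fin n) (Fin n ⊕ Fin n) ℝ)) (Sum.inr i) (Sum.inr j)
    = ω j * B (Sum.inr i) (Sum.inl j) + ω i * B (Sum.inl i) (Sum.inr j) := by
  simp [Matrix.mul_apply, Fintype.sum_sum_type, Matrix.fromBlocks, Matrix.diagonal,
    Matrix.one_apply, ite_mul, mul_ite, Finset.mul_sum, Finset.sum_ite_eq,
    Finset.sum_ite_eq', mul_comm]

end helpers

/-- For `A = diag(ω₁,…,ω_n,ω₁,…,ω_n)` with the `ω_i` nonzero and with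
pairwise distinct squares, a symmetric matrix `M` lies in the range of
`χ_A(B) = B*J*A - A*J*B` (with `B` symmetric) iff its diagonal has the form
`(g₁,…,g_n,−g₁,…,−g_n)`. -/
theorem range_chi (n : ℕ) (ω : Fin n → ℝ)
    (hω : ∀ i, ω i ≠ 0) (hω' : ∀ i j, i ≠ j → ω i ^ 2 ≠ ω j ^ 2)
    (J A : Matrix (Fin n ⊕ Fin n) (Fin n ⊕ Fin n) ℝ)
    (hJ : J = Matrix.fromBlocks 0 1 (-1) 0)
    (hA : A = Matrix.diagonal (Sum.elim ω ω))
    (M : Matrix (Fin n ⊕ Fin n) (Fin n ⊕ Fin n) ℝ) (hM : Mᵀ = M) :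
    (∃ B : Matrix (Fin n ⊕ Fin n) (Fin n ⊕ Fin n) ℝ,
        Bᵀ = B ∧ M = B * J * A - A * J * B) ↔
      ∃ g : Fin n → ℝ, ∀ i : Fin n,
        M (Sum.inl i) (Sum.inl i) = g i ∧ M (Sum.inr i) (Sum.inr i) = -g i := by
  subst hJ hA
  have hsym : ∀ x y, M x y = M y x := fun x y => (congrFun (congrFun hM y) x : _)
  have hd : ∀ i j : Fin n, i ≠ j → ω i ^ 2 - ω j ^ 2 ≠ 0 :=
    fun i j h => sub_ne_zero.mpr (hω' i j h)
  constructor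
  · rintro ⟨B, hBsym, hMeq⟩
    refine ⟨fun i => M (Sum.inl i) (Sum.inl i), fun i => ⟨rfl, ?_⟩⟩
    have hb : B (Sum.inr i) (Sum.inl i) = B (Sum.inl i) (Sum.inr i) :=
      ((congrFun (congrFun hBsym (Sum.inr i)) (Sum.inl i)).symm : _)
    show M (Sum.inr i) (Sum.inr i) = -(M (Sum.inl i) (Sum.inl i))
    rw [hMeq, chi_rr, chi_ll, hb]; ring
  · rintro ⟨g, hg⟩
    set P : Matrix (Fin n) (Fin n) ℝ := of fun i j =>
      if i = j then M (Sum.inl i) (Sum.inr i) / ω i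
      else (ω i * M (Sum.inr i) (Sum.inl j) - ω j * M (Sum.inl i) (Sum.inr j))
        / (ω i ^ 2 - ω j ^ 2) with hP
    set Q : Matrix (Fin n) (Fin n) ℝ := of fun i j =>
      if i = j then -M (Sum.inl i) (Sum.inl i) / (2 * ω i)
      else (ω j * M (Sum.inl i) (Sum.inl j) + ω i * M (Sum.inr i) (Sum.inr j))
        / (ω i ^ 2 - ω j ^ 2) with hQ
    set R : Matrix (Fin n) (Fin n) ℝ := of fun i j =>
      if i = j then (0 : ℝ)
      else (ω j * M (Sum.inr i) (Sum.inl j) - ω i * M (Sum.inl i) (Sum.inr j))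
        / (ω i ^ 2 - ω j ^ 2) with hR
    have hPsym : Pᵀ = P := by
      ext i j
      simp only [transpose_apply, hP, of_apply]
      rcases eq_or_ne i j with rfl | hij
      · rfl
      · rw [if_neg hij, if_neg (Ne.symm hij), hsym (Sum.inr j) (Sum.inl i),
          hsym (Sum.inl j) (Sum.inr i)]
        field_simp [hd i j hij, hd j i (Ne.symm hij)]
        ring
    have hRsym : Rᵀ = R := by
      ext i j
      simp only [transpose_apply, hR, of_apply]
      rcases eq_or_ne i j with rfl | hij
      · rfl
      · rw [if_neg hij, if_neg (Ne.symm hij), hsym (Sum.inr j) (Sum.inl i),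
          hsym (Sum.inl j) (Sum.inr i)]
        field_simp [hd i j hij, hd j i (Ne.symm hij)]
        ring
    refine ⟨fromBlocks P Q Qᵀ R, ?_, ?_⟩
    · rw [fromBlocks_transpose, transpose_transpose, hPsym, hRsym]
    · ext p q
      rcases p with i | i <;> rcases q with j | j
      · rw [chi_ll]
        simp only [fromBlocks_apply₁₂, fromBlocks_apply₂₁, transpose_apply, hQ, of_apply]
        rcases eq_or_ne i j with rfl | hij
        · simp only [↓reduceIte]; field_simp [hω i]; ring
        · rw [if_neg hij, if_neg (Ne.symm hij), hsym (Sum.inl j) (Sum.inl i),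
            hsym (Sum.inr j) (Sum.inr i)]
          field_simp [hd i j hij, hd j i (Ne.symm hij)]
          ring
      · rw [chi_lr]
        simp only [fromBlocks_apply₁₁, fromBlocks_apply₂₂, hP, hR, of_apply]
        rcases eq_or_ne i j with rfl | hij
        · simp only [↓reduceIte]; field_simp [hω i]; simp
        · rw [if_neg hij, if_neg hij]
          field_simp [hd i j hij]
          ring
      · rw [chi_rl]
        simp only [fromBlocks_apply₁₁, fromBlocks_apply₂₂, hP, hR, of_apply]
        rcases eq_or_ne i j with rfl | hij
        · rw [if_pos rfl, if_pos rfl, hsym (Sum.inr i) (Sum.inl i)]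
          field_simp [hω i]
          simp
        · rw [if_neg hij, if_neg hij]
          field_simp [hd i j hij]
          ring
      · rw [chi_rr]
        simp only [fromBlocks_apply₁₂, fromBlocks_apply₂₁, transpose_apply, hQ, of_apply]
        rcases eq_or_ne i j with rfl | hij
        · obtain ⟨h1, h2⟩ := hg i
          rw [if_pos rfl, h2, ← h1]
          field_simp [hω i]
          ring
        · rw [if_neg hij, if_neg (Ne.symm hij), hsym (Sum.inl j) (Sum.inl i),
            hsym (Sum.inr j) (Sum.inr i)]
          field_simp [hd i j hij, hd j i (Ne.symm hij)]
          ring
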